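/- If χ is a self-dual code of complexity 2m (m ≥ 2), then e_m ∈ χ and v_m ∉ χ, and the map sending χ to χ ∩ S_{m+1} is a bijection from the set of self-dual codes of complexity 2m onto the set of all codes of complexity m+1. -/

import Mathlib

/-- Symbols of Enriques diagrams: `Sum.inl k` is the vertex `v_k`,
`Sum.inr k` is the edge `e_k`. -/
abbrev ESym : Type := ℕ ⊕ ℕ

def vtx (k : ℕ) : ESym := Sum.inl k
def edg (k : ℕ) : ESym := Sum.inr k

/-- The set `S_n = {v_2,…,v_{n-2}, e_2,…,e_{n-2}}` of undetermined symbols. -/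
def symbols (n : ℕ) : Finset ESym :=
  ((Finset.Icc 2 (n - 2)).image vtx) ∪ ((Finset.Icc 2 (n - 2)).image edg)

/-- A code of an Enriques diagram of complexity `n`: a subset `χ ⊆ S_n` such that
`v_i ∈ χ` implies `e_i ∈ χ` and (`e_{i+1} ∈ χ` or `i = n-2`). -/
def IsCode (n : ℕ) (χ : Finset ESym) : Prop :=
  χ ⊆ symbols n ∧
    ∀ i ∈ Finset.Icc 2 (n - 2), vtx i ∈ χ →
      edg i ∈ χ ∧ (edg (i + 1) ∈ χ ∨ i = n - 2)

instance (n : ℕ) : DecidablePred (IsCode n) := fun χ => by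
  unfold IsCode; infer_instance

/-- The duality `Δ_n` on codes: `v_k ∈ Δ_n(χ)` iff `e_{n-k} ∉ χ`, and
`e_k ∈ Δ_n(χ)` iff `v_{n-k} ∉ χ` (for `k ∈ {2,…,n-2}`). -/
def dual (n : ℕ) (χ : Finset ESym) : Finset ESym :=
  ((Finset.Icc 2 (n - 2)).filter (fun k => edg (n - k) ∉ χ)).image vtx ∪
  ((Finset.Icc 2 (n - 2)).filter (fun k => vtx (n - k) ∉ χ)).image edg

lemma mem_symbols_vtx {n k : ℕ} : vtx k ∈ symbols n ↔ 2 ≤ k ∧ k ≤ n - 2 := by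
  simp [symbols, vtx, edg, Finset.mem_Icc]

lemma mem_symbols_edg {n k : ℕ} : edg k ∈ symbols n ↔ 2 ≤ k ∧ k ≤ n - 2 := by
  simp [symbols, vtx, edg, Finset.mem_Icc]

lemma mem_dual_vtx {n k : ℕ} {χ : Finset ESym} :
    vtx k ∈ dual n χ ↔ (2 ≤ k ∧ k ≤ n - 2) ∧ edg (n - k) ∉ χ := by
  simp only [dual, Finset.mem_union, Finset.mem_image, Finset.mem_filter]
  simp [dual, vtx, edg, Finset.mem_Icc, and_assoc]

lemma mem_dual_edg {n k : ℕ} {χ : Finset ESym} :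
    edg k ∈ dual n χ ↔ (2 ≤ k ∧ k ≤ n - 2) ∧ vtx (n - k) ∉ χ := by
  simp only [dual, Finset.mem_union, Finset.mem_image, Finset.mem_filter]
  simp [dual, vtx, edg, Finset.mem_Icc, and_assoc]

lemma sd_vtx {m : ℕ} {χ : Finset ESym} (hd : dual (2 * m) χ = χ) (k : ℕ) :
    vtx k ∈ χ ↔ (2 ≤ k ∧ k ≤ 2 * m - 2) ∧ edg (2 * m - k) ∉ χ := by
  conv_lhs => rw [← hd]
  exact mem_dual_vtx

lemma sd_edg {m : ℕ} {χ : Finset ESym} (hd : dual (2 * m) χ = χ) (k : ℕ) :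
    edg k ∈ χ ↔ (2 ≤ k ∧ k ≤ 2 * m - 2) ∧ vtx (2 * m - k) ∉ χ := by
  conv_lhs => rw [← hd]
  exact mem_dual_edg

lemma part1 {m : ℕ} (hm : 2 ≤ m) {χ : Finset ESym}
    (hc : IsCode (2 * m) χ) (hd : dual (2 * m) χ = χ) :
    edg m ∈ χ ∧ vtx m ∉ χ := by
  have hmm : 2 * m - m = m := by omega
  have hv : vtx m ∉ χ := by
    intro hmem
    have he : edg m ∈ χ :=
      (hc.2 m (Finset.mem_Icc.mpr ⟨hm, by omega⟩) hmem).1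
    have h2 := ((sd_vtx hd m).mp hmem).2
    rw [hmm] at h2
    exact h2 he
  refine ⟨(sd_edg hd m).mpr ⟨⟨hm, by omega⟩, ?_⟩, hv⟩
  rwa [hmm]

def extend (m : ℕ) (ψ : Finset ESym) : Finset ESym :=
  ψ ∪ {edg m} ∪
  ((Finset.Icc (m + 1) (2 * m - 2)).filter (fun k => edg (2 * m - k) ∉ ψ)).image vtx ∪
  ((Finset.Icc (m + 1) (2 * m - 2)).filter (fun k => vtx (2 * m - k) ∉ ψ)).image edg

lemma mem_extend_vtx {m k : ℕ} {ψ : Finset ESym} :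
    vtx k ∈ extend m ψ ↔
      vtx k ∈ ψ ∨ (m + 1 ≤ k ∧ k ≤ 2 * m - 2 ∧ edg (2 * m - k) ∉ ψ) := by
  simp only [extend, Finset.mem_union, Finset.mem_image, Finset.mem_filter]
  simp [extend, vtx, edg, Finset.mem_Icc, and_assoc]

lemma mem_extend_edg {m k : ℕ} {ψ : Finset ESym} :
    edg k ∈ extend m ψ ↔
      edg k ∈ ψ ∨ k = m ∨ (m + 1 ≤ k ∧ k ≤ 2 * m - 2 ∧ vtx (2 * m - k) ∉ ψ) := by
  simp only [extend, Finset.mem_union, Finset.mem_image, Finset.mem_filter]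
  simp [extend, vtx, edg, Finset.mem_Icc, and_assoc]
  aesop

section Extend
variable {m : ℕ} (hm : 2 ≤ m) {ψ : Finset ESym} (hψ : IsCode (m + 1) ψ)
include hψ

lemma psi_vtx : ∀ k, vtx k ∈ ψ → 2 ≤ k ∧ k ≤ m - 1 := by
  intro k h
  have := mem_symbols_vtx.mp (hψ.1 h)
  omega

lemma psi_edg : ∀ k, edg k ∈ ψ → 2 ≤ k ∧ k ≤ m - 1 := by
  intro k h
  have := mem_symbols_edg.mp (hψ.1 h)
  omega

lemma E_vtx_lo {k : ℕ} (hk : k ≤ m) : vtx k ∈ extend m ψ ↔ vtx k ∈ ψ := by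
  rw [mem_extend_vtx]
  constructor
  · rintro (h | ⟨h1, _, _⟩)
    · exact h
    · omega
  · exact Or.inl

include hm in
lemma E_edg_lo {k : ℕ} (hk : k ≤ m - 1) : edg k ∈ extend m ψ ↔ edg k ∈ ψ := by
  rw [mem_extend_edg]
  constructor
  · rintro (h | h | ⟨h1, _, _⟩)
    · exact h
    · omega
    · omega
  · exact Or.inl

lemma E_edg_m : edg m ∈ extend m ψ := mem_extend_edg.mpr (Or.inr (Or.inl rfl))

lemma E_vtx_m : vtx m ∉ extend m ψ := by
  rw [E_vtx_lo hψ le_rfl]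
  intro h
  have := psi_vtx hψ m h
  omega

lemma E_vtx_hi {k : ℕ} (h1 : m + 1 ≤ k) (h2 : k ≤ 2 * m - 2) :
    vtx k ∈ extend m ψ ↔ edg (2 * m - k) ∉ ψ := by
  rw [mem_extend_vtx]
  have hn : vtx k ∉ ψ := fun h => by have := psi_vtx hψ k h; omega
  constructor
  · rintro (h | ⟨_, _, h⟩)
    · exact absurd h hn
    · exact h
  · intro h; exact Or.inr ⟨h1, h2, h⟩

lemma E_edg_hi {k : ℕ} (h1 : m + 1 ≤ k) (h2 : k ≤ 2 * m - 2) :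
    edg k ∈ extend m ψ ↔ vtx (2 * m - k) ∉ ψ := by
  rw [mem_extend_edg]
  have hn : edg k ∉ ψ := fun h => by have := psi_edg hψ k h; omega
  constructor
  · rintro (h | h | ⟨_, _, h⟩)
    · exact absurd h hn
    · omega
    · exact h
  · intro h; exact Or.inr (Or.inr ⟨h1, h2, h⟩)

include hm in
lemma E_vtx_out {k : ℕ} (h : ¬(2 ≤ k ∧ k ≤ 2 * m - 2)) : vtx k ∉ extend m ψ := by
  rw [mem_extend_vtx]
  rintro (hh | ⟨h1, h2, _⟩)
  · have := psi_vtx hψ k hh; omega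
  · omega

include hm in
lemma E_edg_out {k : ℕ} (h : ¬(2 ≤ k ∧ k ≤ 2 * m - 2)) : edg k ∉ extend m ψ := by
  rw [mem_extend_edg]
  rintro (hh | hh | ⟨h1, h2, _⟩)
  · have := psi_edg hψ k hh; omega
  · omega
  · omega

include hm in
lemma dual_extend : dual (2 * m) (extend m ψ) = extend m ψ := by
  ext x
  rcases x with k | k
  · show vtx k ∈ _ ↔ vtx k ∈ _
    rw [mem_dual_vtx]
    by_cases hr : 2 ≤ k ∧ k ≤ 2 * m - 2
    · by_cases hk1 : k ≤ m - 1
      · rw [E_edg_hi hψ (by omega) (by omega),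
          show 2 * m - (2 * m - k) = k from by omega,
          E_vtx_lo hψ (by omega)]
        simp [hr]
      · by_cases hk2 : k = m
        · rw [hk2, show 2 * m - m = m from by omega]
          simp [E_edg_m hψ, E_vtx_m hψ]
        · rw [E_edg_lo hm hψ (by omega), E_vtx_hi hψ (by omega) (by omega)]
          simp [hr]
    · simp [hr, E_vtx_out hm hψ hr]
  · show edg k ∈ _ ↔ edg k ∈ _
    rw [mem_dual_edg]
    by_cases hr : 2 ≤ k ∧ k ≤ 2 * m - 2
    · by_cases hk1 : k ≤ m - 1
      · rw [E_vtx_hi hψ (by omega) (by omega),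
          show 2 * m - (2 * m - k) = k from by omega,
          E_edg_lo hm hψ (by omega)]
        simp [hr]
      · by_cases hk2 : k = m
        · rw [hk2, show 2 * m - m = m from by omega]
          simp [E_edg_m hψ, E_vtx_m hψ, hr]
          omega
        · rw [E_vtx_lo hψ (by omega), E_edg_hi hψ (by omega) (by omega)]
          simp [hr]
    · simp [hr, E_edg_out hm hψ hr]

include hm in
lemma isCode_extend : IsCode (2 * m) (extend m ψ) := by
  constructor
  · intro x hx
    rcases x with k | k
    · have h := mem_extend_vtx.mp hx
      refine mem_symbols_vtx.mpr ?_
      rcases h with h | ⟨h1, h2, _⟩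
      · have := psi_vtx hψ k h; omega
      · omega
    · have h := mem_extend_edg.mp hx
      refine mem_symbols_edg.mpr ?_
      rcases h with h | h | ⟨h1, h2, _⟩
      · have := psi_edg hψ k h; omega
      · omega
      · omega
  · intro i hi hvi
    rw [Finset.mem_Icc] at hi
    by_cases h1 : i ≤ m - 1
    · have hiψ : vtx i ∈ ψ := (E_vtx_lo hψ (by omega)).mp hvi
      obtain ⟨hei, halt⟩ := hψ.2 i (Finset.mem_Icc.mpr ⟨hi.1, by omega⟩) hiψ
      refine ⟨(E_edg_lo hm hψ h1).mpr hei, Or.inl ?_⟩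
      rcases halt with h | h
      · have := psi_edg hψ _ h
        exact (E_edg_lo hm hψ (by omega)).mpr h
      · have hi1 : i + 1 = m := by omega
        rw [hi1]
        exact E_edg_m hψ
    · by_cases h2 : i = m
      · exact absurd (h2 ▸ hvi) (E_vtx_m hψ)
      · have h3 : m + 1 ≤ i := by omega
        have h4 : i ≤ 2 * m - 2 := hi.2
        have hne : edg (2 * m - i) ∉ ψ := (E_vtx_hi hψ h3 h4).mp hvi
        have hvψ : vtx (2 * m - i) ∉ ψ := fun h =>
          hne (hψ.2 _ (Finset.mem_Icc.mpr ⟨by omega, by omega⟩) h).1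
        refine ⟨(E_edg_hi hψ h3 h4).mpr hvψ, ?_⟩
        by_cases h5 : i = 2 * m - 2
        · exact Or.inr h5
        · refine Or.inl ((E_edg_hi hψ (by omega) (by omega)).mpr ?_)
          intro hvv
          have hj := hψ.2 _ (Finset.mem_Icc.mpr
            ⟨by omega, by have := psi_vtx hψ _ hvv; omega⟩) hvv
          rcases hj.2 with h | h
          · rw [show 2 * m - (i + 1) + 1 = 2 * m - i from by omega] at h
            exact hne h
          · have := psi_vtx hψ _ hvv
            omega

lemma inter_extend : extend m ψ ∩ symbols (m + 1) = ψ := by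
  ext x
  simp only [Finset.mem_inter]
  constructor
  · rintro ⟨hE, hS⟩
    rcases x with k | k
    · have hk := mem_symbols_vtx.mp hS
      rcases mem_extend_vtx.mp hE with h | ⟨h1, _, _⟩
      · exact h
      · omega
    · have hk := mem_symbols_edg.mp hS
      rcases mem_extend_edg.mp hE with h | h | ⟨h1, _, _⟩
      · exact h
      · omega
      · omega
  · intro h
    refine ⟨?_, hψ.1 h⟩
    rcases x with k | k
    · exact mem_extend_vtx.mpr (Or.inl h)
    · exact mem_extend_edg.mpr (Or.inl h)

end Extend

/-- Any self-dual code of complexity `2m` (`m ≥ 2`) contains `e_m` and omits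
`v_m`, and `χ ↦ χ ∩ S_{m+1}` is a bijection from the set of self-dual codes of
complexity `2m` onto the set of all codes of complexity `m+1`. -/
theorem stmt7 (m : ℕ) (hm : 2 ≤ m) :
    (∀ χ : Finset ESym, IsCode (2 * m) χ → dual (2 * m) χ = χ →
        edg m ∈ χ ∧ vtx m ∉ χ) ∧
    Set.BijOn (fun χ : Finset ESym => χ ∩ symbols (m + 1))
      {χ | IsCode (2 * m) χ ∧ dual (2 * m) χ = χ}
      {χ | IsCode (m + 1) χ} := by
  refine ⟨fun χ hc hd => part1 hm hc hd, ?_, ?_, ?_⟩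
  · -- MapsTo
    rintro χ ⟨hc, hd⟩
    refine ⟨Finset.inter_subset_right, ?_⟩
    intro i hi hvi
    rw [Finset.mem_Icc] at hi
    rw [Finset.mem_inter] at hvi
    obtain ⟨hei, halt⟩ := hc.2 i (Finset.mem_Icc.mpr ⟨hi.1, by omega⟩) hvi.1
    refine ⟨Finset.mem_inter.mpr ⟨hei, mem_symbols_edg.mpr ⟨hi.1, hi.2⟩⟩, ?_⟩
    by_cases h : i = m + 1 - 2
    · exact Or.inr h
    · refine Or.inl (Finset.mem_inter.mpr ⟨?_, mem_symbols_edg.mpr ⟨by omega, by omega⟩⟩)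
      rcases halt with h' | h'
      · exact h'
      · omega
  · -- InjOn
    rintro χ₁ ⟨hc1, hd1⟩ χ₂ ⟨hc2, hd2⟩ heq
    simp only at heq
    have key : ∀ x ∈ symbols (m + 1), (x ∈ χ₁ ↔ x ∈ χ₂) := by
      intro x hx
      have h := Finset.ext_iff.mp heq x
      simpa [Finset.mem_inter, hx] using h
    ext x
    rcases x with k | k
    · show vtx k ∈ _ ↔ vtx k ∈ _
      by_cases hr : 2 ≤ k ∧ k ≤ 2 * m - 2
      · by_cases hk1 : k ≤ m - 1
        · exact key (vtx k) (mem_symbols_vtx.mpr ⟨hr.1, by omega⟩)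
        · by_cases hk2 : k = m
          · subst hk2
            simp [(part1 hm hc1 hd1).2, (part1 hm hc2 hd2).2]
          · rw [sd_vtx hd1 k, sd_vtx hd2 k,
              key (edg (2 * m - k)) (mem_symbols_edg.mpr ⟨by omega, by omega⟩)]
      · have h1 : vtx k ∉ χ₁ := fun h => hr (by
          have := mem_symbols_vtx.mp (hc1.1 h); omega)
        have h2 : vtx k ∉ χ₂ := fun h => hr (by
          have := mem_symbols_vtx.mp (hc2.1 h); omega)
        simp [h1, h2]
    · show edg k ∈ _ ↔ edg k ∈ _
      by_cases hr : 2 ≤ k ∧ k ≤ 2 * m - 2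
      · by_cases hk1 : k ≤ m - 1
        · exact key (edg k) (mem_symbols_edg.mpr ⟨hr.1, by omega⟩)
        · by_cases hk2 : k = m
          · subst hk2
            simp [(part1 hm hc1 hd1).1, (part1 hm hc2 hd2).1]
          · rw [sd_edg hd1 k, sd_edg hd2 k,
              key (vtx (2 * m - k)) (mem_symbols_vtx.mpr ⟨by omega, by omega⟩)]
      · have h1 : edg k ∉ χ₁ := fun h => hr (by
          have := mem_symbols_edg.mp (hc1.1 h); omega)
        have h2 : edg k ∉ χ₂ := fun h => hr (by
          have := mem_symbols_edg.mp (hc2.1 h); omega)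
        simp [h1, h2]
  · -- SurjOn
    intro ψ hψ
    exact ⟨extend m ψ, ⟨isCode_extend hm hψ, dual_extend hm hψ⟩, inter_extend hψ⟩
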